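/- Let u₁,…,u_k be non-zero vectors in ℝ² such that the angle between any pair u_i, u_j is at most α for some α ∈ [0, 2π/3). Then |∑_{j=1}^k u_j| ≥ cos(α/2) · ∑_{j=1}^k |u_j|. -/

import Mathlib

set_option maxHeartbeats 800000

open InnerProductGeometry
open scoped RealInnerProductSpace

theorem barvinok_cpx (k : ℕ) (hk : 0 < k) (v : Fin k → ℂ)
    (hv : ∀ j, v j ≠ 0) (α : ℝ) (hα0 : 0 ≤ α) (hα : α < 2 * Real.pi / 3)
    (hang : ∀ i j, angle (v i) (v j) ≤ α) :
    Real.cos (α / 2) * ∑ j, ‖v j‖ ≤ ‖∑ j, v j‖ := by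
  have pi_pos := Real.pi_pos
  haveI : NeZero k := ⟨hk.ne'⟩
  set θ : Fin k → ℝ := fun j => (v j / v 0).arg with hθ
  have hθabs : ∀ j, |θ j| ≤ α := fun j => by
    have := hang j 0
    rwa [Complex.angle_eq_abs_arg (hv j) (hv 0)] at this
  have key : ∀ i j, θ i - θ j ≤ α := by
    intro i j
    by_contra h
    push_neg at h
    have hij : |(v i / v j).arg| ≤ α := by
      have := hang i j
      rwa [Complex.angle_eq_abs_arg (hv i) (hv j)] at this
    have harg : ((v i / v j).arg : Real.Angle) = ((θ i - θ j : ℝ) : Real.Angle) := by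
      rw [Complex.arg_div_coe_angle (hv i) (hv j)]
      have h1 : ((v i / v 0).arg : Real.Angle) = ((v i).arg : Real.Angle) - (v 0).arg :=
        Complex.arg_div_coe_angle (hv i) (hv 0)
      have h2 : ((v j / v 0).arg : Real.Angle) = ((v j).arg : Real.Angle) - (v 0).arg :=
        Complex.arg_div_coe_angle (hv j) (hv 0)
      rw [Real.Angle.coe_sub, hθ]
      simp only
      rw [h1, h2]
      abel
    rw [Real.Angle.angle_eq_iff_two_pi_dvd_sub] at harg
    obtain ⟨n, hn⟩ := harg
    have h1 : |(v i / v j).arg| ≤ Real.pi := Complex.abs_arg_le_pi _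
    have h2 : θ i - θ j ≤ 2 * α := by
      have hi := (abs_le.1 (hθabs i)).2
      have hj := (abs_le.1 (hθabs j)).1
      linarith
    have hup := (abs_le.1 hij).2
    have hlow := (abs_le.1 hij).1
    -- (v i / v j).arg - (θ i - θ j) = 2π n
    have hna : (n : ℝ) ≤ 0 := by
      by_contra h'
      push_neg at h'
      have : (1 : ℝ) ≤ n := by exact_mod_cast (by exact_mod_cast h' : 0 < n)
      nlinarith
    have hnb : (-1 : ℝ) ≤ n := by
      by_contra h'
      push_neg at h'
      have : (n : ℝ) ≤ -2 := by
        have : n ≤ -2 := by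
          have : n < -1 := by exact_mod_cast h'
          omega
        exact_mod_cast this
      nlinarith
    have : (n : ℝ) = 0 ∨ (n : ℝ) = -1 := by
      have : n = 0 ∨ n = -1 := by
        have h1' : n ≤ 0 := by exact_mod_cast hna
        have h2' : -1 ≤ n := by exact_mod_cast hnb
        omega
      rcases this with h' | h' <;> [left; right] <;> exact_mod_cast h'
    rcases this with h' | h'
    · rw [h'] at hn; nlinarith
    · rw [h'] at hn; nlinarith
  obtain ⟨iM, -, hiM⟩ := Finset.exists_max_image Finset.univ θ ⟨0, Finset.mem_univ 0⟩
  obtain ⟨im, -, him⟩ := Finset.exists_min_image Finset.univ θ ⟨0, Finset.mem_univ 0⟩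
  obtain ⟨c, hdev⟩ : ∃ c : ℝ, ∀ j, |θ j - c| ≤ α / 2 := by
    refine ⟨(θ iM + θ im) / 2, fun j => ?_⟩
    rw [abs_le]
    have h1 := hiM j (Finset.mem_univ j)
    have h2 := him j (Finset.mem_univ j)
    have h3 := key iM im
    constructor <;> linarith
  set e : ℂ := (v 0 / ‖v 0‖) * Complex.exp (c * Complex.I) with he
  have hn0 : ‖v 0‖ ≠ 0 := norm_ne_zero_iff.2 (hv 0)
  have hne : ‖e‖ = 1 := by
    rw [he, norm_mul, norm_div, Complex.norm_real]
    rw [show ‖Complex.exp (↑c * Complex.I)‖ = 1 from Complex.norm_exp_ofReal_mul_I c]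
    rw [Real.norm_eq_abs, abs_norm, div_self hn0, one_mul]
  have hee : e ≠ 0 := by
    intro h; rw [h] at hne; simp at hne
  have hinner : ∀ j, Real.cos (α / 2) * ‖v j‖ ≤ ⟪v j, e⟫ := by
    intro j
    have hApos : 0 < ‖v j / v 0‖ := norm_pos_iff.2 (div_ne_zero (hv j) (hv 0))
    have hvj : v j = ((‖v j / v 0‖ : ℝ) : ℂ) *
        Complex.exp ((θ j : ℝ) * Complex.I) * v 0 := by
      rw [hθ]
      simp only
      rw [Complex.norm_mul_exp_arg_mul_I (v j / v 0), div_mul_cancel₀ _ (hv 0)]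
    have he'' : e = (Complex.exp ((c : ℝ) * Complex.I) / (‖v 0‖ : ℂ)) * v 0 := by
      rw [he]; ring
    have hangle : angle (v j) e = |θ j - c| := by
      rw [hvj, he'', Complex.angle_mul_right (hv 0)]
      rw [show ((‖v j / v 0‖ : ℝ) : ℂ) * Complex.exp ((θ j : ℝ) * Complex.I)
          = (‖v j / v 0‖ : ℝ) • Complex.exp ((θ j : ℝ) * Complex.I) from
        Complex.real_smul.symm]
      rw [angle_smul_left_of_pos _ _ hApos]
      rw [show Complex.exp ((c : ℝ) * Complex.I) / (‖v 0‖ : ℂ)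
          = (‖v 0‖⁻¹ : ℝ) • Complex.exp ((c : ℝ) * Complex.I) from by
        rw [Complex.real_smul]; push_cast; ring]
      rw [angle_smul_right_of_pos _ _ (by positivity)]
      rw [Complex.angle_exp_exp]
      congr 1
      rw [toIocMod_eq_self]
      have h1 := (abs_le.1 (hdev j)).1
      have h2 := (abs_le.1 (hdev j)).2
      constructor
      · linarith
      · linarith
    have hcos : Real.cos (α / 2) ≤ Real.cos (angle (v j) e) := by
      rw [hangle]
      exact Real.cos_le_cos_of_nonneg_of_le_pi (abs_nonneg _) (by linarith) (hdev j)
    have h3 := cos_angle_mul_norm_mul_norm (v j) e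
    rw [hne, mul_one] at h3
    rw [← h3]
    nlinarith [norm_nonneg (v j)]
  calc Real.cos (α / 2) * ∑ j, ‖v j‖ = ∑ j, Real.cos (α / 2) * ‖v j‖ := by
        rw [Finset.mul_sum]
    _ ≤ ∑ j, ⟪v j, e⟫ := Finset.sum_le_sum fun j _ => hinner j
    _ = ⟪∑ j, v j, e⟫ := by rw [sum_inner]
    _ ≤ ‖∑ j, v j‖ * ‖e‖ := real_inner_le_norm _ _
    _ = ‖∑ j, v j‖ := by rw [hne, mul_one]

theorem barvinok_vector_sum (k : ℕ) (u : Fin k → EuclideanSpace ℝ (Fin 2))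
    (hu : ∀ j, u j ≠ 0) (α : ℝ) (hα0 : 0 ≤ α) (hα : α < 2 * Real.pi / 3)
    (hang : ∀ i j, angle (u i) (u j) ≤ α) :
    Real.cos (α / 2) * ∑ j, ‖u j‖ ≤ ‖∑ j, u j‖ := by
  rcases Nat.eq_zero_or_pos k with rfl | hk
  · simp
  · set f := (Complex.isometryOfOrthonormal (EuclideanSpace.basisFun (Fin 2) ℝ)).symm with hf
    set v : Fin k → ℂ := fun j => f (u j) with hv
    have hvne : ∀ j, v j ≠ 0 := fun j h => hu j (by
      have := congrArg f.symm h
      simpa [hv] using this)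
    have hangv : ∀ i j, angle (v i) (v j) ≤ α := fun i j => by
      have : angle (v i) (v j) = angle (u i) (u j) :=
        f.toLinearIsometry.angle_map (u i) (u j)
      rw [this]; exact hang i j
    have := barvinok_cpx k hk v hvne α hα0 hα hangv
    have hsum : ‖∑ j, v j‖ = ‖∑ j, u j‖ := by
      rw [hv]
      simp only [← map_sum]
      exact f.norm_map _
    have hnorm : ∀ j, ‖v j‖ = ‖u j‖ := fun j => f.norm_map _
    simp only [hnorm, hsum] at this
    exact this
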